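/- For C = {x ∈ ℝ² | 0 ≤ x₁ ≤ 2, 0 ≤ x₂ ≤ 1 + √(1 − (x₁ − 1)²)}, the point v = (0,1) belongs to es(C) but v ∉ argmax_{u ∈ C} ⟨u, w⟩ for every w with σ_C(w) > 0. -/

import Mathlib

open Set Metric Filter Topology
open scoped RealInnerProductSpace

/-- The set C = {x ∈ ℝ² | 0 ≤ x₁ ≤ 2, 0 ≤ x₂ ≤ 1 + √(1 − (x₁ − 1)²)}. -/
def Cex17 : Set (EuclideanSpace ℝ (Fin 2)) :=
  {p | 0 ≤ p 0 ∧ p 0 ≤ 2 ∧ 0 ≤ p 1 ∧ p 1 ≤ 1 + Real.sqrt (1 - (p 0 - 1) ^ 2)}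

/-- The point v = (0,1). -/
noncomputable def vex17 : EuclideanSpace ℝ (Fin 2) :=
  (WithLp.equiv 2 (Fin 2 → ℝ)).symm ![0, 1]

noncomputable def ptex17 (a b : ℝ) : EuclideanSpace ℝ (Fin 2) :=
  (WithLp.equiv 2 (Fin 2 → ℝ)).symm ![a, b]

lemma ptex17_zero (a b : ℝ) : ptex17 a b 0 = a := rfl
lemma ptex17_one (a b : ℝ) : ptex17 a b 1 = b := rfl
lemma vex17_zero : vex17 0 = 0 := rfl
lemma vex17_one : vex17 1 = 1 := rfl

lemma inner_ptex17 (a b : ℝ) (w : EuclideanSpace ℝ (Fin 2)) :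
    ⟪ptex17 a b, w⟫ = a * w 0 + b * w 1 := by
  simp [PiLp.inner_apply, Fin.sum_univ_two, ptex17_zero, ptex17_one]; ring

lemma inner_vex17 (w : EuclideanSpace ℝ (Fin 2)) :
    ⟪vex17, w⟫ = w 1 := by
  simp [PiLp.inner_apply, Fin.sum_univ_two, vex17_zero, vex17_one]

lemma mem_Cex17 (a b : ℝ) (h0 : 0 ≤ a) (h2 : a ≤ 2) (hb : 0 ≤ b)
    (hb2 : b ≤ 1 + Real.sqrt (1 - (a - 1) ^ 2)) : ptex17 a b ∈ Cex17 := by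
  exact ⟨h0, h2, hb, hb2⟩

/-- v = (0,1) belongs to the end set of Cex17 but to no argmax set of a direction
with positive support value. -/
theorem end_set_point_not_in_S :
    vex17 ∈ {x ∈ Cex17 | ∀ t : ℝ, 1 < t → t • x ∉ Cex17} ∧
    ∀ w : EuclideanSpace ℝ (Fin 2), 0 < sSup ((fun u => ⟪u, w⟫) '' Cex17) →
      vex17 ∉ {u ∈ Cex17 | ∀ u' ∈ Cex17, ⟪u', w⟫ ≤ ⟪u, w⟫} := by
  have hvC : vex17 ∈ Cex17 := by
    refine ⟨le_refl 0, by rw [vex17_zero]; norm_num, by rw [vex17_one]; norm_num, ?_⟩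
    rw [vex17_zero, vex17_one]
    norm_num
  constructor
  · refine ⟨hvC, ?_⟩
    intro t ht hmem
    obtain ⟨_, _, _, h4⟩ := hmem
    have h0 : (t • vex17) 0 = 0 := by
      simp [vex17_zero]
    have h1 : (t • vex17) 1 = t := by
      simp [vex17_one]
    rw [h0, h1] at h4
    norm_num at h4
    linarith
  · intro w hw ⟨_, hmax⟩
    set b := w 1 with hb_def
    -- b > 0
    have hsup_le : sSup ((fun u => ⟪u, w⟫) '' Cex17) ≤ b := by
      refine csSup_le ⟨⟪vex17, w⟫, vex17, hvC, rfl⟩ ?_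
      rintro x ⟨u, hu, rfl⟩
      have := hmax u hu
      rwa [inner_vex17] at this
    have hb : 0 < b := lt_of_lt_of_le hw hsup_le
    -- point (1,2) gives w 0 ≤ -b
    have h12 : ptex17 1 2 ∈ Cex17 := by
      apply mem_Cex17 <;> norm_num
    have hkey := hmax _ h12
    rw [inner_ptex17, inner_vex17] at hkey
    have hw0 : w 0 ≤ -b := by linarith
    set a := -(w 0) with ha_def
    have ha : 0 < a := by linarith
    have hba : b ≤ a := by linarith
    -- the small-ε point
    set c := b / (2 * a) with hc_def
    have hc : 0 < c := by positivity
    set ε := c ^ 2 with he_def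
    have hε : 0 < ε := by positivity
    have hc1 : c ≤ 1 / 2 := by
      rw [hc_def, div_le_div_iff₀ (by linarith) (by norm_num)]
      linarith
    have hε1 : ε ≤ 1 := by nlinarith
    have hεmem : ptex17 ε (1 + Real.sqrt (1 - (ε - 1) ^ 2)) ∈ Cex17 := by
      apply mem_Cex17
      · positivity
      · linarith
      · positivity
      · rfl
    have hkey2 := hmax _ hεmem
    rw [inner_ptex17, inner_vex17] at hkey2
    -- so √(1-(ε-1)^2) * b ≤ ε * a
    have h5 : Real.sqrt (1 - (ε - 1) ^ 2) * b ≤ ε * a := by nlinarith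
    have h6 : Real.sqrt ε ≤ Real.sqrt (1 - (ε - 1) ^ 2) := by
      apply Real.sqrt_le_sqrt; nlinarith
    have h7 : Real.sqrt ε = c := by
      rw [he_def, Real.sqrt_sq hc.le]
    have h8 : c * b ≤ ε * a := by
      calc c * b = Real.sqrt ε * b := by rw [h7]
        _ ≤ Real.sqrt (1 - (ε - 1) ^ 2) * b := by nlinarith [Real.sqrt_nonneg ε]
        _ ≤ ε * a := h5
    -- ε * a = c^2 * a = c * (b/2)
    have h9 : ε * a = c * (b / 2) := by
      rw [he_def, hc_def]; field_simp
    rw [h9] at h8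
    nlinarith
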